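/- Let X be an arbitrary index set. A function g : X × X → [0, 2] is the semivariogram of a unit process on X with no drift if, and only if, (1) g(x,y) = g(y,x) for all x, y ∈ X, and (2) for every positive integer n, every choice of points x₁,…,xₙ ∈ X, and every real symmetric n×n matrix Λ = [λ_{kℓ}], one has ∑_{k,ℓ=1}^n λ_{kℓ} g(x_k, x_ℓ) ≤ σ(Λ) − γ(Λ, {−1,1}), where σ(Λ) = ∑_{k,ℓ=1}^n λ_{kℓ} and γ(Λ, {−1,1}) = min{ ∑_{k,ℓ} λ_{kℓ} z_k z_ℓ : z ∈ {−1,1}ⁿ }. -/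

import Mathlib

open MeasureTheory

namespace Stmt16Aux

open MeasureTheory Set
open scoped ENNReal

noncomputable section

variable {X : Type*} [DecidableEq X]

/-- sign of a boolean -/
def sgn (b : Bool) : ℝ := if b then 1 else -1

lemma sgn_mem (b : Bool) : sgn b = 1 ∨ sgn b = -1 := by
  cases b <;> simp [sgn]

lemma sgn_not (b : Bool) : sgn (!b) = - sgn b := by cases b <;> simp [sgn]

lemma sgn_sq (b : Bool) : sgn b * sgn b = 1 := by cases b <;> norm_num [sgn]

/-- marginalization of a weight function -/
def marg {s t : Finset X} (h : s ⊆ t) (v : (∀ i : t, Bool) → ℝ) : (∀ i : s, Bool) → ℝ :=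
  fun y => ∑ z : (∀ i : t, Bool), if Finset.restrict₂ (π := fun _ : X => Bool) h z = y then v z else 0

/-- the set of admissible symmetric weight functions on `{-1,1}^s` realizing correlations `1 - g` -/
def M (g : X → X → ℝ) (s : Finset X) : Set ((∀ i : s, Bool) → ℝ) :=
  {w | (∀ z, 0 ≤ w z) ∧ (∑ z, w z = 1) ∧ (∀ z, w (fun i => ! z i) = w z) ∧
    (∀ a b : s, (∑ z, w z * (sgn (z a) * sgn (z b))) = 1 - g a b)}

lemma marg_marg {s t u : Finset X} (h1 : s ⊆ t) (h2 : t ⊆ u) (v : (∀ i : u, Bool) → ℝ) :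
    marg h1 (marg h2 v) = marg (h1.trans h2) v := by
  funext y
  simp only [marg]
  calc (∑ x : (∀ i : t, Bool), if Finset.restrict₂ (π := fun _ : X => Bool) h1 x = y then
          ∑ z : (∀ i : u, Bool), if Finset.restrict₂ (π := fun _ : X => Bool) h2 z = x then v z else 0 else 0)
      = ∑ x : (∀ i : t, Bool), ∑ z : (∀ i : u, Bool),
          if Finset.restrict₂ (π := fun _ : X => Bool) h2 z = x then
            (if Finset.restrict₂ (π := fun _ : X => Bool) h1 x = y then v z else 0) else 0 := by
        refine Finset.sum_congr rfl fun x _ => ?_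
        by_cases hx : Finset.restrict₂ (π := fun _ : X => Bool) h1 x = y <;> simp [hx]
    _ = ∑ z : (∀ i : u, Bool), ∑ x : (∀ i : t, Bool),
          if Finset.restrict₂ (π := fun _ : X => Bool) h2 z = x then
            (if Finset.restrict₂ (π := fun _ : X => Bool) h1 x = y then v z else 0) else 0 :=
        Finset.sum_comm
    _ = ∑ z : (∀ i : u, Bool), if Finset.restrict₂ (π := fun _ : X => Bool) (h1.trans h2) z = y then v z else 0 := by
        refine Finset.sum_congr rfl fun z _ => ?_
        rw [Finset.sum_ite_eq]
        simp only [Finset.mem_univ, if_true]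
        have hc : Finset.restrict₂ (π := fun _ : X => Bool) h1 (Finset.restrict₂ (π := fun _ : X => Bool) h2 z)
            = Finset.restrict₂ (π := fun _ : X => Bool) (h1.trans h2) z :=
          congrFun (Finset.restrict₂_comp_restrict₂ (π := fun _ : X => Bool) h1 h2) z
        rw [hc]

/-- generic pushforward formula for sums against a marginal -/
lemma sum_marg_mul {s t : Finset X} (h : s ⊆ t) (w : (∀ i : t, Bool) → ℝ)
    (f : (∀ i : s, Bool) → ℝ) :
    ∑ y, marg h w y * f y = ∑ z, w z * f (Finset.restrict₂ (π := fun _ : X => Bool) h z) := by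
  simp only [marg]
  calc ∑ y, (∑ z : (∀ i : t, Bool), if Finset.restrict₂ (π := fun _ : X => Bool) h z = y then w z else 0) * f y
      = ∑ y, ∑ z : (∀ i : t, Bool),
          if Finset.restrict₂ (π := fun _ : X => Bool) h z = y then w z * f (Finset.restrict₂ (π := fun _ : X => Bool) h z) else 0 := by
        refine Finset.sum_congr rfl fun y _ => ?_
        rw [Finset.sum_mul]
        refine Finset.sum_congr rfl fun z _ => ?_
        by_cases hz : Finset.restrict₂ (π := fun _ : X => Bool) h z = y
        · rw [if_pos hz, if_pos hz, hz]
        · rw [if_neg hz, if_neg hz, zero_mul]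
    _ = ∑ z : (∀ i : t, Bool), ∑ y,
          if Finset.restrict₂ (π := fun _ : X => Bool) h z = y then w z * f (Finset.restrict₂ (π := fun _ : X => Bool) h z) else 0 :=
        Finset.sum_comm
    _ = ∑ z, w z * f (Finset.restrict₂ (π := fun _ : X => Bool) h z) := by
        refine Finset.sum_congr rfl fun z _ => ?_
        rw [Finset.sum_ite_eq]
        simp only [Finset.mem_univ, if_true]

/-- negation as an equivalence -/
def negE (s : Finset X) : (∀ i : s, Bool) ≃ (∀ i : s, Bool) :=
  Function.Involutive.toPerm (fun z => fun i => ! z i) (fun z => by funext i; simp)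

lemma negpi_inj {α : Type*} (a b : α → Bool) : ((fun i => ! a i) = fun i => ! b i) ↔ a = b := by
  constructor
  · intro hh
    funext i
    have := congrFun hh i
    simpa using this
  · rintro rfl; rfl

lemma marg_mem {g : X → X → ℝ} {s t : Finset X} (h : s ⊆ t) {w : (∀ i : t, Bool) → ℝ}
    (hw : w ∈ M g t) : marg h w ∈ M g s := by
  obtain ⟨h0, h1, hsymm, hcor⟩ := hw
  refine ⟨?_, ?_, ?_, ?_⟩
  · intro z
    refine Finset.sum_nonneg fun y _ => ?_
    split
    · exact h0 _
    · exact le_rfl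
  · have := sum_marg_mul h w (fun _ => (1:ℝ))
    simp only [mul_one] at this
    rw [this, h1]
  · intro y
    simp only [marg]
    have := Equiv.sum_comp (negE t) (fun z => if Finset.restrict₂ (π := fun _ : X => Bool) h z = (fun i => ! y i) then w z else 0)
    rw [← this]
    refine Finset.sum_congr rfl fun z _ => ?_
    have hr : Finset.restrict₂ (π := fun _ : X => Bool) h ((negE t) z) = fun i => ! (Finset.restrict₂ (π := fun _ : X => Bool) h z) i := rfl
    rw [hr, if_congr (negpi_inj _ y) rfl rfl]
    by_cases hz : Finset.restrict₂ (π := fun _ : X => Bool) h z = y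
    · rw [if_pos hz, if_pos hz]
      exact hsymm z
    · rw [if_neg hz, if_neg hz]
  · intro a b
    have key := sum_marg_mul h w (fun y => sgn (y a) * sgn (y b))
    rw [key]
    have ha : (a : X) ∈ t := h a.2
    have hb : (b : X) ∈ t := h b.2
    exact hcor ⟨(a : X), ha⟩ ⟨(b : X), hb⟩


/-- the correlation pattern of a sign vector -/
def vmap (s : Finset X) (z : (∀ i : s, Bool)) : (∀ _ : s, ∀ _ : s, ℝ) :=
  fun a b => sgn (z a) * sgn (z b)

def eMat (s : Finset X) (a b : s) : (∀ _ : s, ∀ _ : s, ℝ) :=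
  Pi.single (M := fun _ : s => (∀ _ : s, ℝ)) a (Pi.single (M := fun _ : s => ℝ) b 1)

lemma expandCLM {s : Finset X} (f : ((∀ _ : s, ∀ _ : s, ℝ)) →L[ℝ] ℝ) (Mm : ∀ _ : s, ∀ _ : s, ℝ) :
    f Mm = ∑ a, ∑ b, Mm a b * f (eMat s a b) := by
  have hM : Mm = ∑ a : s, ∑ b : s, Mm a b • eMat s a b := by
    funext a' b'
    simp only [eMat, Finset.sum_apply, Pi.smul_apply, Pi.single_apply, smul_eq_mul]
    simp only [apply_ite (fun u : (∀ _ : s, ℝ) => u b'), Pi.single_apply, Pi.zero_apply,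
      mul_ite, mul_one, mul_zero]
    simp [Finset.sum_ite_eq, Finset.sum_ite_eq']
  conv_lhs => rw [hM]
  rw [map_sum]
  refine Finset.sum_congr rfl fun a _ => ?_
  rw [map_sum]
  refine Finset.sum_congr rfl fun b _ => ?_
  rw [_root_.map_smul, smul_eq_mul]


lemma vmap_symm {s : Finset X} (z : (∀ i : s, Bool)) (a b : s) : vmap s z a b = vmap s z b a := by
  simp [vmap, mul_comm]

lemma C_mem_hull {g : X → X → ℝ}
    (hsym : ∀ x y, g x y = g y x)
    (hineq : ∀ (n : ℕ), 0 < n → ∀ (pts : Fin n → X) (Λ : Matrix (Fin n) (Fin n) ℝ), Λ.IsSymm →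
       ∑ k, ∑ l, Λ k l * g (pts k) (pts l) ≤
         (∑ k, ∑ l, Λ k l) -
           sInf {v : ℝ | ∃ z : Fin n → ℝ, (∀ i, z i = -1 ∨ z i = 1) ∧
             v = ∑ k, ∑ l, Λ k l * z k * z l})
    (s : Finset X) :
    (fun a b : s => 1 - g a b) ∈ convexHull ℝ (Set.range (vmap s)) := by
  set C : (∀ _ : s, ∀ _ : s, ℝ) := fun a b : s => 1 - g a b with hC
  rcases s.eq_empty_or_nonempty with rfl | hs
  · have h1 : C = vmap ∅ (fun i => true) := by
      funext a b
      exact (Finset.notMem_empty _ a.2).elim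
    rw [h1]
    exact subset_convexHull ℝ _ ⟨_, rfl⟩
  by_contra hCK
  obtain ⟨f, u, hfu, hstrict⟩ :=
    geometric_hahn_banach_point_closed (convex_convexHull ℝ _)
      ((Set.finite_range (vmap s)).isClosed_convexHull (𝕜 := ℝ)) hCK
  -- symmetrized coefficient matrix
  set L : s → s → ℝ := fun a b => (f (eMat s a b) + f (eMat s b a)) / 2 with hL
  have hLsymm : ∀ a b, L a b = L b a := fun a b => by rw [hL]; ring_nf
  -- f on symmetric matrices
  have hfsym : ∀ Mm : (∀ _ : s, ∀ _ : s, ℝ), (∀ a b, Mm a b = Mm b a) →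
      f Mm = ∑ a, ∑ b, Mm a b * L a b := by
    intro Mm hMm
    rw [expandCLM f Mm]
    simp only [hL]
    have h2 : ∑ a, ∑ b, Mm a b * (f (eMat s a b) + f (eMat s b a)) / 2
        = ((∑ a, ∑ b, Mm a b * f (eMat s a b)) + ∑ a, ∑ b, Mm a b * f (eMat s b a)) / 2 := by
      rw [← Finset.sum_add_distrib, Finset.sum_div]
      refine Finset.sum_congr rfl fun a _ => ?_
      rw [← Finset.sum_add_distrib, Finset.sum_div]
      exact Finset.sum_congr rfl fun b _ => by ring
    have h3 : ∑ a, ∑ b, Mm a b * f (eMat s b a) = ∑ a, ∑ b, Mm a b * f (eMat s a b) := by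
      rw [Finset.sum_comm]
      refine Finset.sum_congr rfl fun a _ => Finset.sum_congr rfl fun b _ => ?_
      rw [hMm a b]
    calc ∑ a, ∑ b, Mm a b * f (eMat s a b)
        = ((∑ a, ∑ b, Mm a b * f (eMat s a b)) + ∑ a, ∑ b, Mm a b * f (eMat s b a)) / 2 := by
          rw [h3]; ring
      _ = ∑ a, ∑ b, Mm a b * (f (eMat s a b) + f (eMat s b a)) / 2 := h2.symm
      _ = ∑ a, ∑ b, Mm a b * ((f (eMat s a b) + f (eMat s b a)) / 2) := by
          refine Finset.sum_congr rfl fun a _ => Finset.sum_congr rfl fun b _ => ?_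
          ring
  -- transfer to Fin n
  set n := s.card with hn
  have npos : 0 < n := Finset.card_pos.mpr hs
  set e : Fin n ≃ s := s.equivFin.symm with he
  set pts : Fin n → X := fun k => (e k : X) with hpts
  set Lam : Matrix (Fin n) (Fin n) ℝ := Matrix.of fun k l => L (e k) (e l) with hLam
  have hLamsymm : Lam.IsSymm := by
    apply Matrix.ext
    intro k l
    simp only [Matrix.transpose_apply, hLam, Matrix.of_apply]
    exact hLsymm (e l) (e k)
  have key := hineq n npos pts Lam hLamsymm
  -- rewrite the left side
  have hgC : ∀ k l, g (pts k) (pts l) = 1 - C (e k) (e l) := by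
    intro k l; simp [hC, hpts]
  have hCsymm : ∀ a b, C a b = C b a := by
    intro a b; simp [hC, hsym (a : X) (b : X)]
  have hsum_reindex : ∀ (F : s → s → ℝ), ∑ k, ∑ l, F (e k) (e l) = ∑ a, ∑ b, F a b := by
    intro F
    rw [Fintype.sum_equiv e _ (fun a => ∑ b, F a b) (fun k => ?_)]
    exact Fintype.sum_equiv e _ _ (fun l => rfl)
  have hleft : ∑ k, ∑ l, Lam k l * g (pts k) (pts l)
      = (∑ k, ∑ l, Lam k l) - f C := by
    have h4 : ∑ k, ∑ l, Lam k l * g (pts k) (pts l)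
        = (∑ k, ∑ l, Lam k l) - ∑ k, ∑ l, Lam k l * C (e k) (e l) := by
      rw [← Finset.sum_sub_distrib]
      refine Finset.sum_congr rfl fun k _ => ?_
      rw [← Finset.sum_sub_distrib]
      refine Finset.sum_congr rfl fun l _ => ?_
      rw [hgC k l]; ring
    rw [h4]
    congr 1
    rw [hfsym C hCsymm]
    have := hsum_reindex (fun a b => C a b * L a b)
    rw [← this]
    refine Finset.sum_congr rfl fun k _ => Finset.sum_congr rfl fun l _ => ?_
    simp only [hLam, Matrix.of_apply]
    ring
  -- bound the sInf from below by u
  set SS := {v : ℝ | ∃ z : Fin n → ℝ, (∀ i, z i = -1 ∨ z i = 1) ∧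
      v = ∑ k, ∑ l, Lam k l * z k * z l} with hSS
  have hSlb : ∀ v ∈ SS, u ≤ v := by
    rintro v ⟨z, hz, rfl⟩
    set zB : ∀ i : s, Bool := fun a => if z (e.symm a) = 1 then true else false with hzB
    have hsgn : ∀ a : s, sgn (zB a) = z (e.symm a) := by
      intro a
      rcases hz (e.symm a) with h | h
      · have hzBa : zB a = false := by rw [hzB]; simp only [h]; norm_num
        rw [hzBa, h]; simp [sgn]
      · have hzBa : zB a = true := by rw [hzB]; simp [h]
        rw [hzBa, h]; simp [sgn]
    have hv : f (vmap s zB) = ∑ k, ∑ l, Lam k l * z k * z l := by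
      rw [hfsym (vmap s zB) (vmap_symm zB)]
      have := hsum_reindex (fun a b => vmap s zB a b * L a b)
      rw [← this]
      refine Finset.sum_congr rfl fun k _ => Finset.sum_congr rfl fun l _ => ?_
      simp only [vmap, hsgn, Equiv.symm_apply_apply, hLam, Matrix.of_apply]
      ring
    rw [← hv]
    exact le_of_lt (hstrict _ (subset_convexHull ℝ _ ⟨zB, rfl⟩))
  have hSne : SS.Nonempty := by
    refine ⟨∑ k, ∑ l, Lam k l * (1:ℝ) * 1, fun _ => 1, fun i => Or.inr rfl, rfl⟩
  have hsInf : u ≤ sInf SS := le_csInf hSne hSlb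
  rw [hleft] at key
  have : f C ≥ sInf SS := by linarith
  linarith [lt_of_lt_of_le hfu (le_trans hsInf this)]



lemma M_nonempty {g : X → X → ℝ}
    (hsym : ∀ x y, g x y = g y x)
    (hineq : ∀ (n : ℕ), 0 < n → ∀ (pts : Fin n → X) (Λ : Matrix (Fin n) (Fin n) ℝ), Λ.IsSymm →
       ∑ k, ∑ l, Λ k l * g (pts k) (pts l) ≤
         (∑ k, ∑ l, Λ k l) -
           sInf {v : ℝ | ∃ z : Fin n → ℝ, (∀ i, z i = -1 ∨ z i = 1) ∧
             v = ∑ k, ∑ l, Λ k l * z k * z l})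
    (s : Finset X) :
    ∃ w : (∀ i : s, Bool) → ℝ, (∀ z, 0 ≤ w z) ∧ (∑ z, w z = 1) ∧
      (∀ z, w (fun i => ! z i) = w z) ∧
      (∀ a b : s, (∑ z, w z * (sgn (z a) * sgn (z b))) = 1 - g a b) := by
  have hCm := C_mem_hull hsym hineq s
  -- replace the hull by explicit convex combinations
  set Kw : Set (∀ _ : s, ∀ _ : s, ℝ) :=
    {x | ∃ w : (∀ i : s, Bool) → ℝ, (∀ z, 0 ≤ w z) ∧ (∑ z, w z = 1) ∧
      x = ∑ z, w z • vmap s z} with hKw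
  have hconv : Convex ℝ Kw := by
    rintro x ⟨w1, hw1, hs1, rfl⟩ y ⟨w2, hw2, hs2, rfl⟩ a b ha hb hab
    refine ⟨fun z => a * w1 z + b * w2 z,
      fun z => add_nonneg (mul_nonneg ha (hw1 z)) (mul_nonneg hb (hw2 z)), ?_, ?_⟩
    · rw [Finset.sum_add_distrib, ← Finset.mul_sum, ← Finset.mul_sum, hs1, hs2, mul_one, mul_one]
      exact hab
    · rw [Finset.smul_sum, Finset.smul_sum, ← Finset.sum_add_distrib]
      refine Finset.sum_congr rfl fun z _ => ?_
      rw [add_smul, smul_smul, smul_smul]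
  have hsub : Set.range (vmap s) ⊆ Kw := by
    rintro x ⟨z0, rfl⟩
    refine ⟨fun z => if z = z0 then 1 else 0, fun z => by dsimp only; split <;> norm_num, by simp, ?_⟩
    rw [Finset.sum_congr rfl (fun z _ => ?_)]
    · rw [Finset.sum_ite_eq' Finset.univ z0 (fun z => vmap s z)]
      simp
    · rw [ite_smul, one_smul, zero_smul]
  have hCKw : (fun a b : s => 1 - g a b) ∈ Kw := convexHull_min hsub hconv hCm
  obtain ⟨w, hw0, hw1, hwC⟩ := hCKw
  -- symmetrize
  refine ⟨fun z => (w z + w (fun i => ! z i)) / 2, ?_, ?_, ?_, ?_⟩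
  · intro z
    have := hw0 z
    have := hw0 (fun i => ! z i)
    positivity
  · have hneg : ∑ z : (∀ i : s, Bool), w (fun i => ! z i) = ∑ z, w z := Equiv.sum_comp (negE s) w
    rw [← Finset.sum_div, Finset.sum_add_distrib, hneg, hw1]
    norm_num
  · intro z
    have hzz : (fun i => ! (! z i)) = z := by funext i; simp
    simp only [hzz]
    ring
  · intro a b
    have hCab : (∑ z, w z * (sgn (z a) * sgn (z b))) = 1 - g a b := by
      have := congrFun (congrFun hwC a) b
      simp only [Finset.sum_apply, Pi.smul_apply, smul_eq_mul, vmap] at this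
      exact this.symm
    have hneg2 : ∑ z : (∀ i : s, Bool), w (fun i => ! z i) * (sgn (z a) * sgn (z b))
        = ∑ z, w z * (sgn (z a) * sgn (z b)) := by
      have := Equiv.sum_comp (negE s) (fun z => w z * (sgn (z a) * sgn (z b)))
      rw [← this]
      refine Finset.sum_congr rfl fun z _ => ?_
      have h1 : (negE s) z = fun i => ! z i := rfl
      rw [h1]
      have h2 : ∀ c : s, sgn ((fun i => ! z i) c) = - sgn (z c) := fun c => sgn_not (z c)
      rw [h2 a, h2 b]
      ring
    calc ∑ z : (∀ i : s, Bool), (w z + w (fun i => ! z i)) / 2 * (sgn (z a) * sgn (z b))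
        = ((∑ z : (∀ i : s, Bool), w z * (sgn (z a) * sgn (z b)))
            + ∑ z : (∀ i : s, Bool), w (fun i => ! z i) * (sgn (z a) * sgn (z b))) / 2 := by
          rw [← Finset.sum_add_distrib, Finset.sum_div]
          exact Finset.sum_congr rfl fun z _ => by ring
      _ = 1 - g a b := by rw [hneg2, hCab]; ring



lemma M_val_mem_Icc {g : X → X → ℝ} {s : Finset X} {w : (∀ i : s, Bool) → ℝ}
    (hw : w ∈ M g s) (z : (∀ i : s, Bool)) : w z ∈ Set.Icc (0:ℝ) 1 := by
  obtain ⟨h0, h1, _, _⟩ := hw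
  refine ⟨h0 z, ?_⟩
  calc w z ≤ ∑ y, w y := Finset.single_le_sum (fun y _ => h0 y) (Finset.mem_univ z)
    _ = 1 := h1

lemma isClosed_M (g : X → X → ℝ) (s : Finset X) : IsClosed (M g s) := by
  have hrw : M g s = (⋂ z : (∀ i : s, Bool), {v : (∀ i : s, Bool) → ℝ | 0 ≤ v z}) ∩
      ({v : (∀ i : s, Bool) → ℝ | (∑ z, v z) = 1} ∩
       ((⋂ z : (∀ i : s, Bool), {v : (∀ i : s, Bool) → ℝ | v (fun i => ! z i) = v z}) ∩
        (⋂ a : s, ⋂ b : s, {v : (∀ i : s, Bool) → ℝ |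
          (∑ z, v z * (sgn (z a) * sgn (z b))) = 1 - g a b}))) := by
    ext v
    simp only [M, Set.mem_setOf_eq, Set.mem_inter_iff, Set.mem_iInter, Set.mem_setOf_eq]
  rw [hrw]
  refine IsClosed.inter (isClosed_iInter fun z => ?_) (IsClosed.inter ?_ (IsClosed.inter
    (isClosed_iInter fun z => ?_) (isClosed_iInter fun a => isClosed_iInter fun b => ?_)))
  · exact isClosed_le continuous_const (continuous_apply z)
  · exact isClosed_eq (continuous_finset_sum _ fun z _ => continuous_apply z) continuous_const
  · exact isClosed_eq (continuous_apply _) (continuous_apply _)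
  · exact isClosed_eq
      (continuous_finset_sum _ fun z _ => (continuous_apply z).mul continuous_const)
      continuous_const

lemma exists_consistent {g : X → X → ℝ}
    (hsym : ∀ x y, g x y = g y x)
    (hineq : ∀ (n : ℕ), 0 < n → ∀ (pts : Fin n → X) (Λ : Matrix (Fin n) (Fin n) ℝ), Λ.IsSymm →
       ∑ k, ∑ l, Λ k l * g (pts k) (pts l) ≤
         (∑ k, ∑ l, Λ k l) -
           sInf {v : ℝ | ∃ z : Fin n → ℝ, (∀ i, z i = -1 ∨ z i = 1) ∧
             v = ∑ k, ∑ l, Λ k l * z k * z l}) :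
    ∃ u : ∀ s : Finset X, (∀ i : s, Bool) → ℝ,
      (∀ s, u s ∈ M g s) ∧
      ∀ (s t : Finset X) (h : s ⊆ t), u s = marg h (u t) := by
  classical
  have hMne : ∀ s : Finset X, ∃ w, w ∈ M g s := by
    intro s
    obtain ⟨w, h1, h2, h3, h4⟩ := M_nonempty hsym hineq s
    exact ⟨w, h1, h2, h3, h4⟩
  set W := ∀ s : Finset X, (∀ i : s, Bool) → ℝ with hW
  set K0 : Set W := Set.pi Set.univ
    (fun s : Finset X => Set.pi Set.univ fun _ : (∀ i : s, Bool) => Set.Icc (0:ℝ) 1) with hK0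
  have hK0c : IsCompact K0 :=
    isCompact_univ_pi fun s => isCompact_univ_pi fun _ => isCompact_Icc
  set F : (Finset X ⊕ Finset X × Finset X) → Set W := fun i =>
    Sum.elim (fun s => {u : W | u s ∈ M g s})
      (fun p => ⋂ (h : p.1 ⊆ p.2), {u : W | u p.1 = marg h (u p.2)}) i with hF
  have hFc : ∀ i, IsClosed (F i) := by
    rintro (s | ⟨s, t⟩)
    · exact (isClosed_M g s).preimage (continuous_apply s)
    · refine isClosed_iInter fun h => isClosed_eq (continuous_apply s) ?_
      refine continuous_pi fun y => continuous_finset_sum _ fun z _ => ?_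
      by_cases hzy : Finset.restrict₂ (π := fun _ : X => Bool) h z = y
      · simp only [marg, hzy, if_true]
        exact (continuous_apply z).comp (continuous_apply t)
      · simp only [marg, hzy, if_false]
        exact continuous_const
  have hFIP : ∀ fn : Finset (Finset X ⊕ Finset X × Finset X),
      (K0 ∩ ⋂ i ∈ fn, F i).Nonempty := by
    intro fn
    set U : Finset X := fn.sup (Sum.elim id fun p => p.1 ∪ p.2) with hU
    obtain ⟨wU, hwU⟩ := hMne U
    set u0 : W := fun s => if h : s ⊆ U then marg h wU else (hMne s).choose with hu0
    have hu0M : ∀ s, u0 s ∈ M g s := by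
      intro s
      simp only [hu0]
      by_cases h : s ⊆ U
      · rw [dif_pos h]; exact marg_mem h hwU
      · rw [dif_neg h]; exact (hMne s).choose_spec
    refine ⟨u0, ?_, ?_⟩
    · intro s _
      intro z _
      exact M_val_mem_Icc (hu0M s) z
    · simp only [Set.mem_iInter]
      rintro (s | ⟨s, t⟩) hi
      · exact hu0M s
      · simp only [hF, Sum.elim_inr, Set.mem_iInter, Set.mem_setOf_eq]
        intro h
        have ht : t ⊆ U := by
          have h2 : s ∪ t ⊆ U :=
            Finset.le_sup (f := Sum.elim id fun p : Finset X × Finset X => p.1 ∪ p.2) hi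
          exact (Finset.subset_union_right (s₁ := s) (s₂ := t)).trans h2
        have hs : s ⊆ U := h.trans ht
        simp only [hu0, dif_pos hs, dif_pos ht]
        rw [marg_marg h ht wU]
  obtain ⟨u, -, hu⟩ := hK0c.inter_iInter_nonempty F hFc hFIP
  simp only [Set.mem_iInter] at hu
  refine ⟨u, fun s => hu (Sum.inl s), fun s t h => ?_⟩
  have := hu (Sum.inr (s, t))
  simp only [hF, Sum.elim_inr, Set.mem_iInter, Set.mem_setOf_eq] at this
  exact this h

attribute [local instance] Classical.propDecidable

instance : Nonempty (∀ _ : X, Bool) := ⟨fun _ => true⟩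

lemma all_measurable {s : Finset X} (S : Set (∀ i : s, Bool)) : MeasurableSet S :=
  (Set.to_countable S).measurableSet

lemma restrict_surj (s : Finset X) :
    Function.Surjective (s.restrict (π := fun _ : X => Bool)) := by
  intro y
  refine ⟨fun x => if hx : x ∈ s then y ⟨x, hx⟩ else true, ?_⟩
  funext i
  simp [Finset.restrict]

lemma cylinder_lift {s t : Finset X} (h : s ⊆ t) (S : Set (∀ i : s, Bool)) :
    cylinder (α := fun _ : X => Bool) s S =
      cylinder (α := fun _ : X => Bool) t (Finset.restrict₂ (π := fun _ : X => Bool) h ⁻¹' S) := by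
  rw [cylinder, cylinder, ← Set.preimage_comp, Finset.restrict₂_comp_restrict]

lemma base_mono {s : Finset X} {S T : Set (∀ i : s, Bool)}
    (h : cylinder (α := fun _ : X => Bool) s S ⊆ cylinder (α := fun _ : X => Bool) s T) :
    S ⊆ T := by
  intro y hy
  obtain ⟨f, rfl⟩ := restrict_surj s y
  have : f ∈ cylinder (α := fun _ : X => Bool) s S := by rwa [mem_cylinder]
  have := h this
  rwa [mem_cylinder] at this

lemma biUnion_cylinder {ι : Type*} (fn : Finset ι) {s : Finset X}
    (T : ι → Set (∀ i : s, Bool)) :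
    ⋃ i ∈ fn, cylinder (α := fun _ : X => Bool) s (T i) =
      cylinder (α := fun _ : X => Bool) s (⋃ i ∈ fn, T i) := by
  ext f
  simp only [Set.mem_iUnion, mem_cylinder]



variable (u : ∀ s : Finset X, (∀ i : s, Bool) → ℝ)

/-- the atomic measure on the finite product determined by the weights `u s` -/
def Pm (s : Finset X) : Measure (∀ i : s, Bool) :=
  ∑ z : (∀ i : s, Bool), ENNReal.ofReal (u s z) • Measure.dirac z

lemma Pm_apply (s : Finset X) (S : Set (∀ i : s, Bool)) :
    Pm u s S = ∑ z, if z ∈ S then ENNReal.ofReal (u s z) else 0 := by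
  rw [Pm, Measure.finset_sum_apply]
  refine Finset.sum_congr rfl fun z _ => ?_
  rw [Measure.smul_apply, Measure.dirac_apply' z (all_measurable S), Set.indicator_apply]
  by_cases hz : z ∈ S
  · simp [hz]
  · simp [hz]

lemma Pm_univ (hu0 : ∀ s z, 0 ≤ u s z) (hu1 : ∀ s : Finset X, (∑ z, u s z) = 1)
    (s : Finset X) : Pm u s Set.univ = 1 := by
  rw [Pm_apply]
  simp only [Set.mem_univ, if_true]
  rw [← ENNReal.ofReal_sum_of_nonneg (fun z _ => hu0 s z), hu1 s]
  exact ENNReal.ofReal_one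

lemma Pm_proj (hu0 : ∀ s z, 0 ≤ u s z)
    (hucons : ∀ (s t : Finset X) (h : s ⊆ t), u s = marg h (u t)) :
    IsProjectiveMeasureFamily (α := fun _ : X => Bool) (Pm u) := by
  intro I J hJI
  ext S hS
  have hmeas : Measurable (Finset.restrict₂ (π := fun _ : X => Bool) hJI) :=
    measurable_pi_lambda _ fun j => measurable_pi_apply _
  rw [Measure.map_apply hmeas hS]
  rw [Pm_apply, Pm_apply]
  have hcons := hucons J I hJI
  calc (∑ y, if y ∈ S then ENNReal.ofReal (u J y) else 0)
      = ∑ y, if y ∈ S then (∑ z : (∀ i : I, Bool),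
          if Finset.restrict₂ (π := fun _ : X => Bool) hJI z = y then ENNReal.ofReal (u I z) else 0) else 0 := by
        refine Finset.sum_congr rfl fun y _ => ?_
        by_cases hy : y ∈ S
        · rw [if_pos hy, if_pos hy, hcons]
          rw [marg]
          rw [ENNReal.ofReal_sum_of_nonneg]
          · refine Finset.sum_congr rfl fun z _ => ?_
            split
            · rfl
            · exact ENNReal.ofReal_zero
          · intro z _
            split
            · exact hu0 I z
            · exact le_rfl
        · rw [if_neg hy, if_neg hy]
    _ = ∑ y, ∑ z : (∀ i : I, Bool), if Finset.restrict₂ (π := fun _ : X => Bool) hJI z = y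
          then (if y ∈ S then ENNReal.ofReal (u I z) else 0) else 0 := by
        refine Finset.sum_congr rfl fun y _ => ?_
        by_cases hy : y ∈ S
        · rw [if_pos hy]
          refine Finset.sum_congr rfl fun z _ => ?_
          split <;> rfl
        · rw [if_neg hy]
          symm
          refine Finset.sum_eq_zero fun z _ => ?_
          split <;> rfl
    _ = ∑ z : (∀ i : I, Bool), ∑ y, if Finset.restrict₂ (π := fun _ : X => Bool) hJI z = y
          then (if y ∈ S then ENNReal.ofReal (u I z) else 0) else 0 := Finset.sum_comm
    _ = ∑ z : (∀ i : I, Bool),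
          if z ∈ Finset.restrict₂ (π := fun _ : X => Bool) hJI ⁻¹' S then ENNReal.ofReal (u I z) else 0 := by
        refine Finset.sum_congr rfl fun z _ => ?_
        rw [Finset.sum_ite_eq]
        simp only [Finset.mem_univ, if_true, Set.mem_preimage]


section Content

/-- the cylinder content -/
def mc : Set (∀ _ : X, Bool) → ℝ≥0∞ := fun A =>
  if hA : A ∈ measurableCylinders (fun _ : X => Bool) then
    Pm u (measurableCylinders.finset hA) (measurableCylinders.set hA) else ∞

variable {u}

lemma mc_cyl (hu0 : ∀ s z, 0 ≤ u s z)
    (hucons : ∀ (s t : Finset X) (h : s ⊆ t), u s = marg h (u t))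
    (s : Finset X) (S : Set (∀ i : s, Bool)) :
    mc u (cylinder s S) = Pm u s S := by
  have hmem : cylinder s S ∈ measurableCylinders (fun _ : X => Bool) :=
    cylinder_mem_measurableCylinders (α := fun _ : X => Bool) s S (all_measurable S)
  rw [mc, dif_pos hmem]
  exact (Pm_proj u hu0 hucons).congr_cylinder (all_measurable _) (all_measurable S)
    (measurableCylinders.eq_cylinder hmem).symm

lemma mc_empty (hu0 : ∀ s z, 0 ≤ u s z)
    (hucons : ∀ (s t : Finset X) (h : s ⊆ t), u s = marg h (u t)) : mc u ∅ = 0 := by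
  have h1 : (∅ : Set (∀ _ : X, Bool)) = cylinder (∅ : Finset X) ∅ := (cylinder_empty _).symm
  rw [h1, mc_cyl hu0 hucons]
  simp [Pm_apply]

lemma mc_subadd (hu0 : ∀ s z, 0 ≤ u s z)
    (hucons : ∀ (s t : Finset X) (h : s ⊆ t), u s = marg h (u t))
    (s : Finset X) (S : Set (∀ i : s, Bool)) (f : ℕ → Set (∀ _ : X, Bool))
    (hcov : cylinder s S ⊆ ⋃ i, f i) :
    mc u (cylinder s S) ≤ ∑' i, mc u (f i) := by
  by_cases hcyl : ∀ i, f i ∈ measurableCylinders (fun _ : X => Bool)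
  swap
  · push_neg at hcyl
    obtain ⟨i, hi⟩ := hcyl
    have : mc u (f i) = ∞ := by rw [mc, dif_neg hi]
    rw [ENNReal.tsum_eq_top_of_eq_top ⟨i, this⟩]
    exact le_top
  -- all the sets in the cover are cylinders
  set t : ℕ → Finset X := fun i => measurableCylinders.finset (hcyl i) with ht
  set T : ∀ i : ℕ, Set (∀ j : t i, Bool) := fun i => measurableCylinders.set (hcyl i) with hT
  have hfi : ∀ i, f i = cylinder (t i) (T i) := fun i => measurableCylinders.eq_cylinder (hcyl i)
  -- open and compact
  have hopen : ∀ i, IsOpen (f i) := by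
    intro i
    rw [hfi i, cylinder]
    exact (isOpen_discrete (T i)).preimage (continuous_pi fun j => continuous_apply _)
  have hcomp : IsCompact (cylinder (α := fun _ : X => Bool) s S) := by
    have hcl : IsClosed (cylinder (α := fun _ : X => Bool) s S) :=
      IsClosed.cylinder s (isClosed_discrete S)
    exact hcl.isCompact
  obtain ⟨fn, hfn⟩ := hcomp.elim_finite_subcover f hopen hcov
  -- common base
  set U : Finset X := s ∪ fn.sup t with hU
  have hsU : s ⊆ U := Finset.subset_union_left
  have htU : ∀ i ∈ fn, t i ⊆ U := fun i hi =>
    (Finset.le_sup hi).trans Finset.subset_union_right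
  set S' : Set (∀ j : U, Bool) := Finset.restrict₂ (π := fun _ : X => Bool) hsU ⁻¹' S with hS'
  have hlift : cylinder (α := fun _ : X => Bool) s S = cylinder U S' := cylinder_lift hsU S
  set T' : ℕ → Set (∀ j : U, Bool) := fun i => if hi : i ∈ fn then
      Finset.restrict₂ (π := fun _ : X => Bool) (htU i hi) ⁻¹' (T i) else ∅ with hT'
  have hsub2 : S' ⊆ ⋃ i ∈ fn, T' i := by
    refine base_mono ?_
    rw [← biUnion_cylinder fn T', ← hlift]
    refine hfn.trans ?_
    refine Set.iUnion₂_mono fun i hi => ?_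
    rw [hfi i, hT']
    dsimp only
    rw [dif_pos hi, cylinder_lift (htU i hi) (T i)]
  calc mc u (cylinder s S) = Pm u U S' := by rw [hlift, mc_cyl hu0 hucons]
    _ ≤ Pm u U (⋃ i ∈ fn, T' i) := measure_mono hsub2
    _ ≤ ∑ i ∈ fn, Pm u U (T' i) := measure_biUnion_finset_le fn _
    _ = ∑ i ∈ fn, mc u (f i) := by
        refine Finset.sum_congr rfl fun i hi => ?_
        rw [hT']
        dsimp only
        rw [dif_pos hi, hfi i, cylinder_lift (htU i hi) (T i), mc_cyl hu0 hucons]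
    _ ≤ ∑' i, mc u (f i) := ENNReal.sum_le_tsum fn

lemma mc_carath (hu0 : ∀ s z, 0 ≤ u s z)
    (hucons : ∀ (s t : Finset X) (h : s ⊆ t), u s = marg h (u t))
    {A : Set (∀ _ : X, Bool)} (hA : A ∈ measurableCylinders (fun _ : X => Bool))
    (B : Set (∀ _ : X, Bool)) : mc u (B ∩ A) + mc u (B \ A) ≤ mc u B := by
  by_cases hB : B ∈ measurableCylinders (fun _ : X => Bool)
  swap
  · have : mc u B = ∞ := by rw [mc, dif_neg hB]
    rw [this]
    exact le_top
  obtain ⟨sA, SA, _, rfl⟩ := (mem_measurableCylinders _).1 hA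
  obtain ⟨sB, SB, _, rfl⟩ := (mem_measurableCylinders _).1 hB
  set U : Finset X := sA ∪ sB with hU
  have hAU : sA ⊆ U := Finset.subset_union_left
  have hBU : sB ⊆ U := Finset.subset_union_right
  set SA' : Set (∀ j : U, Bool) := Finset.restrict₂ (π := fun _ : X => Bool) hAU ⁻¹' SA with hSA'
  set SB' : Set (∀ j : U, Bool) := Finset.restrict₂ (π := fun _ : X => Bool) hBU ⁻¹' SB with hSB'
  rw [cylinder_lift hAU SA, cylinder_lift hBU SB, inter_cylinder_same, diff_cylinder_same,
    mc_cyl hu0 hucons, mc_cyl hu0 hucons, mc_cyl hu0 hucons]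
  exact le_of_eq (measure_inter_add_diff SB' (all_measurable SA'))

/-- the extension to the product σ-algebra -/
def muP (hu0 : ∀ s z, 0 ≤ u s z)
    (hucons : ∀ (s t : Finset X) (h : s ⊆ t), u s = marg h (u t)) :
    Measure (∀ _ : X, Bool) :=
  (OuterMeasure.ofFunction (mc u) (mc_empty hu0 hucons)).toMeasure (by
    rw [← generateFrom_measurableCylinders]
    refine MeasurableSpace.generateFrom_le fun A hA => ?_
    exact OuterMeasure.ofFunction_caratheodory fun B => mc_carath hu0 hucons hA B)

lemma muP_cyl (hu0 : ∀ s z, 0 ≤ u s z)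
    (hucons : ∀ (s t : Finset X) (h : s ⊆ t), u s = marg h (u t))
    (s : Finset X) (S : Set (∀ i : s, Bool)) :
    muP hu0 hucons (cylinder s S) = Pm u s S := by
  rw [muP, toMeasure_apply _ _ ((all_measurable S).cylinder)]
  refine le_antisymm (OuterMeasure.ofFunction_le _ |>.trans_eq (mc_cyl hu0 hucons s S)) ?_
  rw [← mc_cyl hu0 hucons s S]
  rw [OuterMeasure.ofFunction_apply]
  exact le_iInf₂ fun f hf => mc_subadd hu0 hucons s S f hf

lemma muP_univ (hu0 : ∀ s z, 0 ≤ u s z) (hu1 : ∀ s : Finset X, (∑ z, u s z) = 1)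
    (hucons : ∀ (s t : Finset X) (h : s ⊆ t), u s = marg h (u t)) :
    muP hu0 hucons Set.univ = 1 := by
  have h1 : (Set.univ : Set (∀ _ : X, Bool)) = cylinder (∅ : Finset X) Set.univ :=
    (cylinder_univ _).symm
  rw [h1, muP_cyl hu0 hucons, Pm_univ u hu0 hu1]

end Content

lemma integral_muP {u : ∀ s : Finset X, (∀ i : s, Bool) → ℝ}
    (hu0 : ∀ s z, 0 ≤ u s z)
    (hucons : ∀ (s t : Finset X) (h : s ⊆ t), u s = marg h (u t))
    (s : Finset X) (h : (∀ i : s, Bool) → ℝ) :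
    ∫ b, h (s.restrict b) ∂(muP hu0 hucons) = ∑ z, u s z * h z := by
  have hrm : Measurable (s.restrict (π := fun _ : X => Bool)) :=
    measurable_pi_lambda _ fun i => measurable_pi_apply _
  have hhm : Measurable h := fun t _ => all_measurable _
  have hmap : (muP hu0 hucons).map (s.restrict (π := fun _ : X => Bool)) = Pm u s := by
    ext S hS
    rw [Measure.map_apply hrm hS]
    exact muP_cyl hu0 hucons s S
  have h1 : ∫ b, h (s.restrict b) ∂(muP hu0 hucons)
      = ∫ z, h z ∂((muP hu0 hucons).map (s.restrict (π := fun _ : X => Bool))) :=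
    (integral_map hrm.aemeasurable hhm.aestronglyMeasurable).symm
  rw [h1, hmap, Pm]
  have hbound : ∀ z, ‖h z‖ ≤ ∑ y, ‖h y‖ :=
    fun z => Finset.single_le_sum (fun y _ => norm_nonneg (h y)) (Finset.mem_univ z)
  have hintd : ∀ z : (∀ i : s, Bool), Integrable h (Measure.dirac z) := by
    intro z
    exact ⟨hhm.aestronglyMeasurable,
      HasFiniteIntegral.of_bounded (C := ∑ y, ‖h y‖) (Filter.Eventually.of_forall hbound)⟩
  have hint : ∀ z ∈ Finset.univ, Integrable h
      (ENNReal.ofReal (u s z) • Measure.dirac z) :=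
    fun z _ => (hintd z).smul_measure ENNReal.ofReal_ne_top
  rw [integral_finset_sum_measure hint]
  refine Finset.sum_congr rfl fun z _ => ?_
  rw [integral_smul_measure, integral_dirac, ENNReal.toReal_ofReal (hu0 s z), smul_eq_mul]

lemma mean_zero {g : X → X → ℝ} {s : Finset X} {w : (∀ i : s, Bool) → ℝ}
    (hw : w ∈ M g s) (a : s) : ∑ z, w z * sgn (z a) = 0 := by
  obtain ⟨_, _, hsymm, _⟩ := hw
  have h1 : ∑ z : (∀ i : s, Bool), w z * sgn (z a)
      = ∑ z : (∀ i : s, Bool), - (w z * sgn (z a)) := by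
    calc ∑ z : (∀ i : s, Bool), w z * sgn (z a)
        = ∑ z : (∀ i : s, Bool), w ((negE s) z) * sgn (((negE s) z) a) :=
          (Equiv.sum_comp (negE s) (fun z => w z * sgn (z a))).symm
      _ = ∑ z : (∀ i : s, Bool), - (w z * sgn (z a)) := by
          refine Finset.sum_congr rfl fun z _ => ?_
          have e1 : (negE s) z = fun i => ! z i := rfl
          rw [e1, hsymm z]
          have e2 : sgn ((fun i => ! z i) a) = - sgn (z a) := sgn_not (z a)
          rw [e2]
          ring
  rw [Finset.sum_neg_distrib] at h1
  linarith

lemma backward_exists {g : X → X → ℝ}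
    (hsym : ∀ x y, g x y = g y x)
    (hineq : ∀ (n : ℕ), 0 < n → ∀ (pts : Fin n → X) (Λ : Matrix (Fin n) (Fin n) ℝ), Λ.IsSymm →
       ∑ k, ∑ l, Λ k l * g (pts k) (pts l) ≤
         (∑ k, ∑ l, Λ k l) -
           sInf {v : ℝ | ∃ z : Fin n → ℝ, (∀ i, z i = -1 ∨ z i = 1) ∧
             v = ∑ k, ∑ l, Λ k l * z k * z l}) :
    ∃ P : Measure (X → ℝ), IsProbabilityMeasure P ∧
      (∀ x : X, ∀ᵐ ω ∂P, ω x ∈ ({-1, 1} : Set ℝ)) ∧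
      (∀ x y : X, Integrable (fun ω => ω x - ω y) P) ∧
      (∀ x y : X, Integrable (fun ω => (ω x - ω y)^2) P) ∧
      (∀ x y : X, ∫ ω, (ω x - ω y) ∂P = 0) ∧
      (∀ x y : X, g x y = (1/2) * ∫ ω, (ω x - ω y)^2 ∂P) := by
  obtain ⟨u, huM, hucons⟩ := exists_consistent hsym hineq
  have hu0 : ∀ s z, 0 ≤ u s z := fun s z => (huM s).1 z
  have hu1 : ∀ s : Finset X, (∑ z, u s z) = 1 := fun s => (huM s).2.1
  haveI : IsProbabilityMeasure (muP hu0 hucons) := ⟨muP_univ hu0 hu1 hucons⟩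
  set T : (∀ _ : X, Bool) → (X → ℝ) := fun b x => sgn (b x) with hTdef
  have hT : Measurable T := by
    refine measurable_pi_lambda _ fun x => ?_
    have he : (fun c : ∀ _ : X, Bool => T c x) = (fun v : Bool => sgn v) ∘ (fun c : ∀ _ : X, Bool => c x) := rfl
    rw [he]
    exact measurable_from_top.comp (measurable_pi_apply x)
  have hsgn2 : ∀ (p q : Bool), ‖sgn p - sgn q‖ ≤ 2 := by
    intro p q
    rcases sgn_mem p with h1 | h1 <;> rcases sgn_mem q with h2 | h2 <;>
      rw [h1, h2] <;> norm_num [Real.norm_eq_abs]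
  have hincr_meas : ∀ x y : X, Measurable (fun ω : X → ℝ => ω x - ω y) :=
    fun x y => (measurable_pi_apply x).sub (measurable_pi_apply y)
  have hsq_meas : ∀ x y : X, Measurable (fun ω : X → ℝ => (ω x - ω y)^2) :=
    fun x y => ((measurable_pi_apply x).sub (measurable_pi_apply y)).pow_const 2
  refine ⟨(muP hu0 hucons).map T, Measure.isProbabilityMeasure_map hT.aemeasurable, ?_, ?_, ?_, ?_, ?_⟩
  · intro x
    have hms : MeasurableSet {ω : X → ℝ | ω x ∈ ({-1, 1} : Set ℝ)} :=
      measurable_pi_apply x (Set.Finite.measurableSet (Set.toFinite _))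
    rw [MeasureTheory.ae_map_iff hT.aemeasurable hms]
    refine Filter.Eventually.of_forall fun b => ?_
    rcases sgn_mem (b x) with h | h
    · have : T b x = 1 := h
      rw [this]; simp
    · have : T b x = -1 := h
      rw [this]; simp
  · intro x y
    rw [integrable_map_measure (hincr_meas x y).aestronglyMeasurable hT.aemeasurable]
    refine ⟨((hincr_meas x y).comp hT).aestronglyMeasurable,
      HasFiniteIntegral.of_bounded (C := 2) (Filter.Eventually.of_forall fun b => ?_)⟩
    exact hsgn2 (b x) (b y)
  · intro x y
    rw [integrable_map_measure (hsq_meas x y).aestronglyMeasurable hT.aemeasurable]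
    refine ⟨((hsq_meas x y).comp hT).aestronglyMeasurable,
      HasFiniteIntegral.of_bounded (C := 4) (Filter.Eventually.of_forall fun b => ?_)⟩
    have h1 := hsgn2 (b x) (b y)
    have h2 : ((fun ω : X → ℝ => (ω x - ω y)^2) ∘ T) b = (sgn (b x) - sgn (b y))^2 := rfl
    rw [h2, Real.norm_eq_abs, abs_pow]
    have h3 : |sgn (b x) - sgn (b y)| ≤ 2 := by rwa [Real.norm_eq_abs] at h1
    nlinarith [abs_nonneg (sgn (b x) - sgn (b y))]
  · intro x y
    rw [integral_map hT.aemeasurable (hincr_meas x y).aestronglyMeasurable]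
    set s : Finset X := {x, y} with hs
    have hx : x ∈ s := by simp [hs]
    have hy : y ∈ s := by simp [hs]
    have hrepr : ∫ b, ((fun ω : X → ℝ => ω x - ω y) (T b)) ∂(muP hu0 hucons)
        = ∫ b, (fun z : (∀ i : s, Bool) => sgn (z ⟨x, hx⟩) - sgn (z ⟨y, hy⟩))
            (s.restrict b) ∂(muP hu0 hucons) := rfl
    rw [hrepr, integral_muP hu0 hucons s
      (fun z : (∀ i : s, Bool) => sgn (z ⟨x, hx⟩) - sgn (z ⟨y, hy⟩))]
    have hsplit : ∑ z : (∀ i : s, Bool), u s z * (sgn (z ⟨x, hx⟩) - sgn (z ⟨y, hy⟩))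
        = (∑ z : (∀ i : s, Bool), u s z * sgn (z ⟨x, hx⟩))
          - ∑ z : (∀ i : s, Bool), u s z * sgn (z ⟨y, hy⟩) := by
      rw [← Finset.sum_sub_distrib]
      exact Finset.sum_congr rfl fun z _ => by ring
    rw [hsplit, mean_zero (huM s) ⟨x, hx⟩, mean_zero (huM s) ⟨y, hy⟩, sub_zero]
  · intro x y
    rw [integral_map hT.aemeasurable (hsq_meas x y).aestronglyMeasurable]
    set s : Finset X := {x, y} with hs
    have hx : x ∈ s := by simp [hs]
    have hy : y ∈ s := by simp [hs]
    have hrepr : ∫ b, ((fun ω : X → ℝ => (ω x - ω y)^2) (T b)) ∂(muP hu0 hucons)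
        = ∫ b, (fun z : (∀ i : s, Bool) => (sgn (z ⟨x, hx⟩) - sgn (z ⟨y, hy⟩))^2)
            (s.restrict b) ∂(muP hu0 hucons) := rfl
    rw [hrepr, integral_muP hu0 hucons s
      (fun z : (∀ i : s, Bool) => (sgn (z ⟨x, hx⟩) - sgn (z ⟨y, hy⟩))^2)]
    have hcor := (huM s).2.2.2 ⟨x, hx⟩ ⟨y, hy⟩
    have hexp : ∑ z : (∀ i : s, Bool), u s z * (sgn (z ⟨x, hx⟩) - sgn (z ⟨y, hy⟩))^2
        = 2 * (∑ z : (∀ i : s, Bool), u s z)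
          - 2 * ∑ z : (∀ i : s, Bool), u s z * (sgn (z ⟨x, hx⟩) * sgn (z ⟨y, hy⟩)) := by
      rw [Finset.mul_sum, Finset.mul_sum, ← Finset.sum_sub_distrib]
      refine Finset.sum_congr rfl fun z _ => ?_
      have h1 := sgn_sq (z ⟨x, hx⟩)
      have h2 := sgn_sq (z ⟨y, hy⟩)
      have key : (sgn (z ⟨x, hx⟩) - sgn (z ⟨y, hy⟩))^2
          = 2 - 2*(sgn (z ⟨x, hx⟩) * sgn (z ⟨y, hy⟩)) := by linear_combination h1 + h2
      rw [key]
      ring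
    rw [hexp, hu1 s, hcor]
    ring

lemma forward_dir {g : X → X → ℝ}
    (P : Measure (X → ℝ)) (hP : IsProbabilityMeasure P)
    (hae : ∀ x : X, ∀ᵐ ω ∂P, ω x ∈ ({-1, 1} : Set ℝ))
    (hgdef : ∀ x y : X, g x y = (1/2) * ∫ ω, (ω x - ω y)^2 ∂P) :
    (∀ x y, g x y = g y x) ∧
     ∀ (n : ℕ), 0 < n → ∀ (pts : Fin n → X) (Λ : Matrix (Fin n) (Fin n) ℝ), Λ.IsSymm →
       ∑ k, ∑ l, Λ k l * g (pts k) (pts l) ≤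
         (∑ k, ∑ l, Λ k l) -
           sInf {v : ℝ | ∃ z : Fin n → ℝ, (∀ i, z i = -1 ∨ z i = 1) ∧
             v = ∑ k, ∑ l, Λ k l * z k * z l} := by
  have haemem : ∀ x : X, ∀ᵐ ω ∂P, ω x = -1 ∨ ω x = 1 := by
    intro x
    filter_upwards [hae x] with ω hω
    simpa using hω
  have hprodm : ∀ x y : X, Measurable (fun ω : X → ℝ => ω x * ω y) :=
    fun x y => (measurable_pi_apply x).mul (measurable_pi_apply y)
  have hprod : ∀ x y : X, Integrable (fun ω : X → ℝ => ω x * ω y) P := by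
    intro x y
    refine ⟨(hprodm x y).aestronglyMeasurable,
      HasFiniteIntegral.of_bounded (C := 1) ?_⟩
    filter_upwards [haemem x, haemem y] with ω h1 h2
    rcases h1 with h1 | h1 <;> rcases h2 with h2 | h2 <;>
      rw [h1, h2] <;> norm_num [Real.norm_eq_abs]
  have hc : ∀ x y : X, g x y = 1 - ∫ ω, ω x * ω y ∂P := by
    intro x y
    rw [hgdef x y]
    have hcong : (fun ω : X → ℝ => (ω x - ω y)^2) =ᵐ[P]
        (fun ω : X → ℝ => 2 - 2 * (ω x * ω y)) := by
      filter_upwards [haemem x, haemem y] with ω h1 h2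
      rcases h1 with h1 | h1 <;> rcases h2 with h2 | h2 <;> rw [h1, h2] <;> norm_num
    rw [integral_congr_ae hcong]
    rw [integral_sub (integrable_const 2) ((hprod x y).const_mul 2)]
    rw [integral_const, MeasureTheory.integral_const_mul, probReal_univ]
    simp only [ENNReal.toReal_one, smul_eq_mul, one_mul]
    ring
  constructor
  · intro x y
    rw [hgdef x y, hgdef y x]
    congr 1
    refine integral_congr_ae (Filter.Eventually.of_forall fun ω => ?_)
    ring
  · intro n npos pts Λ hΛ
    set c : Fin n → Fin n → ℝ := fun k l => ∫ ω, ω (pts k) * ω (pts l) ∂P with hcdef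
    set SS := {v : ℝ | ∃ z : Fin n → ℝ, (∀ i, z i = -1 ∨ z i = 1) ∧
        v = ∑ k, ∑ l, Λ k l * z k * z l} with hSS
    -- the big integrand
    set F : (X → ℝ) → ℝ := fun ω => ∑ k, ∑ l, Λ k l * (ω (pts k) * ω (pts l)) with hF
    have hFint : Integrable F P := by
      refine integrable_finset_sum _ fun k _ => ?_
      exact integrable_finset_sum _ fun l _ => (hprod (pts k) (pts l)).const_mul (Λ k l)
    have hIF : ∫ ω, F ω ∂P = ∑ k, ∑ l, Λ k l * c k l := by
      rw [hF]
      rw [integral_finset_sum _ (fun k _ =>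
        integrable_finset_sum _ fun l _ => (hprod (pts k) (pts l)).const_mul (Λ k l))]
      refine Finset.sum_congr rfl fun k _ => ?_
      rw [integral_finset_sum _ (fun l _ => (hprod (pts k) (pts l)).const_mul (Λ k l))]
      refine Finset.sum_congr rfl fun l _ => ?_
      rw [MeasureTheory.integral_const_mul]
    -- SS is finite, hence bounded below
    have hSSfin : SS.Finite := by
      refine Set.Finite.subset (Set.finite_range
        (fun zb : Fin n → Bool => ∑ k, ∑ l, Λ k l * (if zb k then (1:ℝ) else -1)
          * (if zb l then (1:ℝ) else -1))) ?_
      rintro v ⟨z, hz, rfl⟩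
      refine ⟨fun k => if z k = 1 then true else false, ?_⟩
      refine Finset.sum_congr rfl fun k _ => Finset.sum_congr rfl fun l _ => ?_
      have hzk : (if (if z k = 1 then true else false) then (1:ℝ) else -1) = z k := by
        rcases hz k with h | h
        · rw [h]; norm_num
        · rw [h]; norm_num
      have hzl : (if (if z l = 1 then true else false) then (1:ℝ) else -1) = z l := by
        rcases hz l with h | h
        · rw [h]; norm_num
        · rw [h]; norm_num
      rw [hzk, hzl]
    have hbdd : BddBelow SS := hSSfin.bddBelow
    -- a.e. lower bound
    have hlow : (fun _ : (X → ℝ) => sInf SS) ≤ᵐ[P] F := by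
      have hall : ∀ᵐ ω ∂P, ∀ k : Fin n, ω (pts k) = -1 ∨ ω (pts k) = 1 :=
        (MeasureTheory.ae_all_iff).2 fun k => haemem (pts k)
      filter_upwards [hall] with ω hω
      have hmem : F ω ∈ SS := by
        refine ⟨fun k => ω (pts k), hω, ?_⟩
        rw [hF]
        exact Finset.sum_congr rfl fun k _ => Finset.sum_congr rfl fun l _ => by ring
      exact csInf_le hbdd hmem
    have hIlow : sInf SS ≤ ∫ ω, F ω ∂P := by
      have h1 := integral_mono_ae (integrable_const (sInf SS)) hFint hlow
      rwa [integral_const, probReal_univ, one_smul] at h1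
    have hsum : ∑ k, ∑ l, Λ k l * g (pts k) (pts l)
        = (∑ k, ∑ l, Λ k l) - ∑ k, ∑ l, Λ k l * c k l := by
      rw [← Finset.sum_sub_distrib]
      refine Finset.sum_congr rfl fun k _ => ?_
      rw [← Finset.sum_sub_distrib]
      refine Finset.sum_congr rfl fun l _ => ?_
      rw [hc (pts k) (pts l)]
      ring
    rw [hsum]
    have := hIF ▸ hIlow
    linarith

end

end Stmt16Aux

def IsUnitProcessSemivariogram {X : Type*} (g : X → X → ℝ) : Prop :=
  ∃ P : MeasureTheory.Measure (X → ℝ), MeasureTheory.IsProbabilityMeasure P ∧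
    (∀ x : X, ∀ᵐ ω ∂P, ω x ∈ ({-1, 1} : Set ℝ)) ∧
    (∀ x y : X, MeasureTheory.Integrable (fun ω => ω x - ω y) P) ∧
    (∀ x y : X, MeasureTheory.Integrable (fun ω => (ω x - ω y)^2) P) ∧
    (∀ x y : X, ∫ ω, (ω x - ω y) ∂P = 0) ∧
    (∀ x y : X, g x y = (1/2) * ∫ ω, (ω x - ω y)^2 ∂P)

theorem stmt16 {X : Type*} (g : X → X → ℝ) (hg : ∀ x y, g x y ∈ Set.Icc (0:ℝ) 2) :
    IsUnitProcessSemivariogram g ↔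
    ((∀ x y, g x y = g y x) ∧
     ∀ (n : ℕ), 0 < n → ∀ (pts : Fin n → X) (Λ : Matrix (Fin n) (Fin n) ℝ), Λ.IsSymm →
       ∑ k, ∑ l, Λ k l * g (pts k) (pts l) ≤
         (∑ k, ∑ l, Λ k l) -
           sInf {v : ℝ | ∃ z : Fin n → ℝ, (∀ i, z i = -1 ∨ z i = 1) ∧
             v = ∑ k, ∑ l, Λ k l * z k * z l}) := by
  letI : DecidableEq X := Classical.decEq X
  constructor
  · rintro ⟨P, hP, hae, hint1, hint2, hmean, hgdef⟩
    exact Stmt16Aux.forward_dir P hP hae hgdef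
  · rintro ⟨hsym, hineq⟩
    obtain ⟨P, h1, h2, h3, h4, h5, h6⟩ := Stmt16Aux.backward_exists hsym hineq
    exact ⟨P, h1, h2, h3, h4, h5, h6⟩
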